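/- Hemisphere lemma: any closed curve on the unit sphere S² of length less than 2π is contained in an open hemisphere; that is, there exists a unit vector z with ⟨z, γ(t)⟩ > 0 for all t. -/

import Mathlib

set_option maxHeartbeats 1000000
set_option linter.unusedSectionVars false

open Set
open scoped RealInnerProductSpace ENNReal NNReal

section Auxiliary


lemma arccos_le_arccos_of_le {x y : ℝ} (hxy : x ≤ y) : Real.arccos y ≤ Real.arccos x := by
  rw [Real.arccos, Real.arccos]
  have := Real.monotone_arcsin hxy
  linarith

variable {F : Type*} [NormedAddCommGroup F] [InnerProductSpace ℝ F]

lemma inner_unit_mem {u v : F} (hu : ‖u‖ = 1) (hv : ‖v‖ = 1) :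
    -1 ≤ ⟪u, v⟫ ∧ ⟪u, v⟫ ≤ 1 := by
  have := abs_real_inner_le_norm u v
  rw [hu, hv] at this
  constructor <;> [linarith [neg_abs_le (⟪u, v⟫ : ℝ)]; linarith [le_abs_self (⟪u, v⟫ : ℝ)]]

lemma chord_eq {u v : F} (hu : ‖u‖ = 1) (hv : ‖v‖ = 1) :
    ‖u - v‖ = 2 * Real.sin (Real.arccos ⟪u, v⟫ / 2) := by
  obtain ⟨h1, h2⟩ := inner_unit_mem hu hv
  set θ := Real.arccos ⟪u, v⟫ with hθ
  have hc : Real.cos θ = ⟪u, v⟫ := Real.cos_arccos h1 h2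
  have hsc := Real.sin_sq_add_cos_sq (θ / 2)
  have hcsq : Real.cos (θ / 2) ^ 2 = 1 / 2 + Real.cos θ / 2 := by
    have := Real.cos_sq (θ / 2)
    rwa [mul_div_cancel₀ θ (two_ne_zero)] at this
  have hsq : ‖u - v‖ ^ 2 = (2 * Real.sin (θ / 2)) ^ 2 := by
    rw [norm_sub_sq_real, hu, hv]
    nlinarith
  have h3 : 0 ≤ Real.sin (θ / 2) := by
    apply Real.sin_nonneg_of_nonneg_of_le_pi
    · linarith [Real.arccos_nonneg (⟪u, v⟫ : ℝ)]
    · linarith [Real.arccos_le_pi (⟪u, v⟫ : ℝ), Real.pi_pos]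
  nlinarith [norm_nonneg (u - v)]

lemma arccos_inner_triangle {x u v : F} (hx : ‖x‖ = 1) (hu : ‖u‖ = 1) (hv : ‖v‖ = 1) :
    Real.arccos ⟪x, v⟫ ≤ Real.arccos ⟪x, u⟫ + Real.arccos ⟪u, v⟫ := by
  set α := Real.arccos ⟪x, u⟫ with hα
  set β := Real.arccos ⟪u, v⟫ with hβ
  rcases le_or_gt Real.pi (α + β) with h | h
  · exact (Real.arccos_le_pi _).trans h
  obtain ⟨hxu1, hxu2⟩ := inner_unit_mem hx hu
  obtain ⟨huv1, huv2⟩ := inner_unit_mem hu hv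
  have hcα : Real.cos α = ⟪x, u⟫ := Real.cos_arccos hxu1 hxu2
  have hcβ : Real.cos β = ⟪u, v⟫ := Real.cos_arccos huv1 huv2
  set x' := x - ⟪x, u⟫ • u with hx'
  set v' := v - ⟪u, v⟫ • u with hv'
  have hinner : ⟪x', v'⟫ = ⟪x, v⟫ - ⟪x, u⟫ * ⟪u, v⟫ := by
    have huu : ⟪u, u⟫ = (1 : ℝ) := by
      rw [real_inner_self_eq_norm_sq, hu]; norm_num
    simp only [hx', hv', inner_sub_left, inner_sub_right, real_inner_smul_left,
      real_inner_smul_right, huu]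
    rw [real_inner_comm u x]
    ring
  have hnx'sq : ‖x'‖ ^ 2 = 1 - ⟪x, u⟫ ^ 2 := by
    rw [hx', norm_sub_sq_real, real_inner_smul_right, norm_smul, hx, hu, Real.norm_eq_abs]
    have := sq_abs (⟪x, u⟫ : ℝ)
    nlinarith
  have hnv'sq : ‖v'‖ ^ 2 = 1 - ⟪u, v⟫ ^ 2 := by
    rw [hv', norm_sub_sq_real, real_inner_smul_right, norm_smul, hv, hu, Real.norm_eq_abs,
      real_inner_comm v u]
    have := sq_abs (⟪v, u⟫ : ℝ)
    have h2 := real_inner_comm v u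
    nlinarith
  have hnx' : ‖x'‖ = Real.sin α := by
    rw [hα, Real.sin_arccos, ← hnx'sq, Real.sqrt_sq (norm_nonneg _)]
  have hnv' : ‖v'‖ = Real.sin β := by
    rw [hβ, Real.sin_arccos, ← hnv'sq, Real.sqrt_sq (norm_nonneg _)]
  have hcs : -(‖x'‖ * ‖v'‖) ≤ ⟪x', v'⟫ := by
    have := abs_real_inner_le_norm x' v'
    linarith [neg_abs_le (⟪x', v'⟫ : ℝ)]
  have key : Real.cos (α + β) ≤ ⟪x, v⟫ := by
    rw [Real.cos_add, hcα, hcβ]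
    rw [hnx', hnv'] at hcs
    linarith [hinner]
  have h0 : 0 ≤ α + β := by
    have := Real.arccos_nonneg (⟪x, u⟫ : ℝ)
    have := Real.arccos_nonneg (⟪u, v⟫ : ℝ)
    linarith
  calc Real.arccos ⟪x, v⟫ ≤ Real.arccos (Real.cos (α + β)) := arccos_le_arccos_of_le key
    _ = α + β := Real.arccos_cos h0 h.le

lemma arccos_le_eVariationOn (f : ℝ → F) {a b : ℝ} (hab : a ≤ b)
    (hcont : ContinuousOn f (Icc a b)) (hsph : ∀ t ∈ Icc a b, ‖f t‖ = 1) :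
    ENNReal.ofReal (Real.arccos ⟪f a, f b⟫) ≤ eVariationOn f (Icc a b) := by
  classical
  set θ := Real.arccos ⟪f a, f b⟫ with hθdef
  have hθ0 : 0 ≤ θ := Real.arccos_nonneg _
  have hθπ : θ ≤ Real.pi := Real.arccos_le_pi _
  rcases eq_or_lt_of_le hθ0 with hθpos | hθpos
  · simp [← hθpos]
  have haa : a ∈ Icc a b := ⟨le_rfl, hab⟩
  have hbb : b ∈ Icc a b := ⟨hab, le_rfl⟩
  set g : ℝ → ℝ := fun t => Real.arccos ⟪f a, f t⟫ with hgdef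
  have hgc : ContinuousOn g (Icc a b) :=
    Real.continuous_arccos.comp_continuousOn (continuousOn_const.inner hcont)
  have hga : g a = 0 := by
    have : ⟪f a, f a⟫ = (1 : ℝ) := by
      rw [real_inner_self_eq_norm_sq, hsph a haa]; norm_num
    simp only [hgdef, this, Real.arccos_one]
  have hgb : g b = θ := rfl
  -- key step estimate
  have key : ∀ n : ℕ, 0 < n →
      ENNReal.ofReal ((n : ℝ) * (2 * Real.sin (θ / (2 * n)))) ≤ eVariationOn f (Icc a b) := by
    intro n hn
    have hnR : (0 : ℝ) < n := Nat.cast_pos.2 hn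
    set step : ℝ → ℝ := fun t =>
      if h : ∃ s ∈ Icc t b, g s = min (g t + θ / n) θ then h.choose else b with hstepdef
    have hstep : ∀ t ∈ Icc a b, g t ≤ θ →
        step t ∈ Icc t b ∧ g (step t) = min (g t + θ / n) θ := by
      intro t ht hgt
      have hmem : min (g t + θ / n) θ ∈ Icc (g t) (g b) := by
        constructor
        · apply le_min _ hgt
          have : 0 ≤ θ / n := by positivity
          linarith
        · rw [hgb]; exact min_le_right _ _
      have hsub : Icc t b ⊆ Icc a b := Icc_subset_Icc ht.1 le_rfl
      obtain ⟨s, hs, hgs⟩ := intermediate_value_Icc ht.2 (hgc.mono hsub) hmem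
      have hex : ∃ s ∈ Icc t b, g s = min (g t + θ / n) θ := ⟨s, hs, hgs⟩
      rw [hstepdef]
      simp only [hex, dite_true]
      exact ⟨hex.choose_spec.1, hex.choose_spec.2⟩
    set σ : ℕ → ℝ := fun k => Nat.rec a (fun _ t => step t) k with hσdef
    have hσ0 : σ 0 = a := rfl
    have hσs : ∀ k, σ (k + 1) = step (σ k) := fun k => rfl
    have hinv : ∀ k : ℕ, σ k ∈ Icc a b ∧ g (σ k) = min ((k : ℝ) * (θ / n)) θ := by
      intro k
      induction k with
      | zero => refine ⟨haa, ?_⟩; simp [hσ0, hga, hθ0]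
      | succ k ih =>
        obtain ⟨hmem, hval⟩ := ih
        have hgtle : g (σ k) ≤ θ := by rw [hval]; exact min_le_right _ _
        obtain ⟨h1, h2⟩ := hstep (σ k) hmem hgtle
        refine ⟨⟨hmem.1.trans h1.1, h1.2⟩, ?_⟩
        rw [hσs, h2, hval]
        rcases le_total ((k : ℝ) * (θ / n)) θ with hc | hc
        · rw [min_eq_left hc]
          push_cast
          rcases le_total (((k : ℝ) + 1) * (θ / n)) θ with hc2 | hc2
          · rw [min_eq_left hc2, min_eq_left (by linarith [hc2] : (k:ℝ) * (θ/n) + θ/n ≤ θ)]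
            ring
          · rw [min_eq_right hc2, min_eq_right (by linarith [hc2] : θ ≤ (k:ℝ) * (θ/n) + θ/n)]
        · rw [min_eq_right hc]
          have h3 : 0 ≤ θ / n := by positivity
          rw [min_eq_right (by linarith : θ ≤ θ + θ / n)]
          rw [min_eq_right]
          push_cast
          nlinarith
    have hmono : Monotone σ := by
      apply monotone_nat_of_le_succ
      intro k
      obtain ⟨hmem, hval⟩ := hinv k
      have hgtle : g (σ k) ≤ θ := by rw [hval]; exact min_le_right _ _
      exact (hstep (σ k) hmem hgtle).1.1
    have hσmem : ∀ k, σ k ∈ Icc a b := fun k => (hinv k).1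
    have hsum := eVariationOn.sum_le (f := f) (n := n) hmono hσmem
    refine le_trans ?_ hsum
    have hterm : ∀ i ∈ Finset.range n,
        ENNReal.ofReal (2 * Real.sin (θ / (2 * n))) ≤ edist (f (σ (i + 1))) (f (σ i)) := by
      intro i hi
      rw [Finset.mem_range] at hi
      have hui : ‖f (σ i)‖ = 1 := hsph _ (hσmem i)
      have hui1 : ‖f (σ (i + 1))‖ = 1 := hsph _ (hσmem (i + 1))
      set ang := Real.arccos ⟪f (σ (i + 1)), f (σ i)⟫ with hangdef
      have hang0 : 0 ≤ ang := Real.arccos_nonneg _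
      have hangπ : ang ≤ Real.pi := Real.arccos_le_pi _
      -- g increment is exactly θ/n
      have hgi : g (σ i) = (i : ℝ) * (θ / n) := by
        rw [(hinv i).2, min_eq_left]
        calc (i : ℝ) * (θ / n) ≤ (n : ℝ) * (θ / n) := by
              apply mul_le_mul_of_nonneg_right _ (by positivity)
              exact_mod_cast hi.le
          _ = θ := by field_simp
      have hgi1 : g (σ (i + 1)) = ((i : ℝ) + 1) * (θ / n) := by
        rw [(hinv (i + 1)).2, min_eq_left]
        · push_cast; ring
        calc ((i + 1 : ℕ) : ℝ) * (θ / n) ≤ (n : ℝ) * (θ / n) := by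
              apply mul_le_mul_of_nonneg_right _ (by positivity)
              exact_mod_cast hi
          _ = θ := by field_simp
      have hcomm : ang = Real.arccos ⟪f (σ i), f (σ (i + 1))⟫ := by
        rw [hangdef, real_inner_comm]
      have htri : g (σ (i + 1)) ≤ g (σ i) + ang := by
        have h5 := arccos_inner_triangle (hsph a haa) hui hui1
        rw [hcomm]
        exact h5
      have hθn : θ / n ≤ ang := by
        rw [hgi, hgi1] at htri
        nlinarith
      -- chord length
      have hchord : ‖f (σ (i + 1)) - f (σ i)‖ = 2 * Real.sin (ang / 2) := chord_eq hui1 hui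
      rw [edist_dist, dist_eq_norm, hchord]
      apply ENNReal.ofReal_le_ofReal
      have hn1R : (1 : ℝ) ≤ n := Nat.one_le_cast.2 hn
      have hd : θ / (2 * n) = (θ / n) / 2 := by ring
      have hmono' : Real.sin (θ / (2 * n)) ≤ Real.sin (ang / 2) := by
        apply Real.strictMonoOn_sin.monotoneOn
        · constructor
          · have : (0:ℝ) ≤ θ / (2 * n) := by positivity
            linarith [Real.pi_pos]
          · rw [div_le_iff₀ (by positivity)]
            nlinarith [Real.pi_pos]
        · constructor
          · linarith [Real.pi_pos]
          · linarith
        · rw [hd]; linarith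
      linarith
    calc ENNReal.ofReal ((n : ℝ) * (2 * Real.sin (θ / (2 * n))))
        = (n : ℕ) • ENNReal.ofReal (2 * Real.sin (θ / (2 * n))) := by
          rw [nsmul_eq_mul, ← ENNReal.ofReal_natCast n, ← ENNReal.ofReal_mul (by positivity)]
      _ = ∑ _i ∈ Finset.range n, ENNReal.ofReal (2 * Real.sin (θ / (2 * n))) := by
          rw [Finset.sum_const, Finset.card_range]
      _ ≤ ∑ i ∈ Finset.range n, edist (f (σ (i + 1))) (f (σ i)) :=
          Finset.sum_le_sum hterm
  -- pass to the limit
  rcases eq_or_ne (eVariationOn f (Icc a b)) ⊤ with hV | hV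
  · rw [hV]; exact le_top
  set R := (eVariationOn f (Icc a b)).toReal with hRdef
  have hR0 : 0 ≤ R := ENNReal.toReal_nonneg
  have hkey' : ∀ n : ℕ, 0 < n → (n : ℝ) * (2 * Real.sin (θ / (2 * n))) ≤ R := by
    intro n hn
    have h1 := key n hn
    rw [← ENNReal.ofReal_toReal hV] at h1
    exact (ENNReal.ofReal_le_ofReal_iff hR0).1 h1
  rw [← ENNReal.ofReal_toReal hV]
  apply ENNReal.ofReal_le_ofReal
  by_contra hcon
  push_neg at hcon
  obtain ⟨n, hn⟩ := exists_nat_gt (max 1 (θ ^ 3 / (16 * (θ - R))))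
  have hn1 : (1 : ℝ) < n := lt_of_le_of_lt (le_max_left _ _) hn
  have hn2 : (2 : ℝ) ≤ n := by
    have : (1 : ℕ) < n := by exact_mod_cast hn1
    exact_mod_cast this
  have hn0R : (0 : ℝ) < n := by linarith
  have hnn : 0 < n := by exact_mod_cast hn0R
  have hgap : 0 < θ - R := by linarith
  have hq : θ ^ 3 / (16 * (θ - R)) < (n : ℝ) := lt_of_le_of_lt (le_max_right _ _) hn
  have hcube : θ ^ 3 / (16 * (n : ℝ) ^ 2) < θ - R := by
    rw [div_lt_iff₀ (by positivity)]
    rw [div_lt_iff₀ (by positivity)] at hq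
    have hnsq : (n : ℝ) ≤ (n : ℝ) ^ 2 := by nlinarith
    nlinarith [mul_le_mul_of_nonneg_left hnsq (by linarith : (0:ℝ) ≤ 16 * (θ - R))]
  set x := θ / (2 * (n : ℝ)) with hxdef
  have hx0 : 0 < x := by positivity
  have hx1 : x ≤ 1 := by
    rw [hxdef, div_le_one (by positivity)]
    nlinarith [Real.pi_le_four]
  have hsin : x - x ^ 3 / 4 < Real.sin x := by
    have := Real.sin_gt_sub_cube hx0; nlinarith [pow_pos hx0 3]
  have hkey'' := hkey' n hnn
  have e1 : 2 * (n : ℝ) * x = θ := by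
    rw [hxdef]; field_simp
  have e2 : 2 * (n : ℝ) * (x ^ 3 / 4) = θ ^ 3 / (16 * (n : ℝ) ^ 2) := by
    rw [hxdef]; field_simp; ring
  have h3 : 2 * (n : ℝ) * (x - x ^ 3 / 4) < 2 * (n : ℝ) * Real.sin x :=
    mul_lt_mul_of_pos_left hsin (by positivity)
  have h4 : 2 * (n : ℝ) * (x - x ^ 3 / 4) = θ - θ ^ 3 / (16 * (n : ℝ) ^ 2) := by
    rw [mul_sub, e1, e2]
  linarith


lemma sum_edist_pert {E : Type*} [PseudoEMetricSpace E] (g g' : ℕ → E) (n : ℕ) (B : ℝ≥0∞)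
    (h : ∀ i, edist (g i) (g' i) ≤ B) :
    ∑ i ∈ Finset.range n, edist (g (i + 1)) (g i) ≤
      (∑ i ∈ Finset.range n, edist (g' (i + 1)) (g' i)) + n * (2 * B) := by
  calc ∑ i ∈ Finset.range n, edist (g (i + 1)) (g i)
      ≤ ∑ i ∈ Finset.range n, (edist (g' (i + 1)) (g' i) + 2 * B) := by
        apply Finset.sum_le_sum
        intro i _
        calc edist (g (i + 1)) (g i)
            ≤ edist (g (i + 1)) (g' (i + 1)) + edist (g' (i + 1)) (g' i) + edist (g' i) (g i) :=
              edist_triangle4 _ _ _ _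
          _ ≤ B + edist (g' (i + 1)) (g' i) + B := by
              gcongr
              · exact h (i + 1)
              · rw [edist_comm]; exact h i
          _ = edist (g' (i + 1)) (g' i) + 2 * B := by ring
    _ = (∑ i ∈ Finset.range n, edist (g' (i + 1)) (g' i)) + n * (2 * B) := by
        rw [Finset.sum_add_distrib, Finset.sum_const, Finset.card_range, nsmul_eq_mul]

lemma exists_split (f : ℝ → F) {a b : ℝ} (hab : a ≤ b) (hcont : ContinuousOn f (Icc a b))
    (hfin : eVariationOn f (Icc a b) ≠ ⊤) :
    ∃ c ∈ Icc a b, eVariationOn f (Icc a c) ≤ eVariationOn f (Icc a b) / 2 ∧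
      eVariationOn f (Icc c b) ≤ eVariationOn f (Icc a b) / 2 := by
  classical
  set L := eVariationOn f (Icc a b) with hLdef
  set θ := L / 2 with hθdef
  have hθtop : θ ≠ ⊤ := by
    simp only [hθdef]
    exact (ENNReal.div_lt_top hfin two_ne_zero).ne
  have hLθθ : θ + θ = L := by rw [hθdef, ENNReal.add_halves]
  set S := {t : ℝ | t ∈ Icc a b ∧ eVariationOn f (Icc a t) ≤ θ} with hSdef
  have haS : a ∈ S := by
    refine ⟨⟨le_rfl, hab⟩, ?_⟩
    rw [Icc_self]
    rw [eVariationOn.subsingleton f (Set.subsingleton_singleton)]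
    exact zero_le
  have hSne : S.Nonempty := ⟨a, haS⟩
  have hSbdd : BddAbove S := ⟨b, fun t ht => ht.1.2⟩
  set c := sSup S with hcdef
  have hac : a ≤ c := le_csSup hSbdd haS
  have hcb : c ≤ b := csSup_le hSne fun t ht => ht.1.2
  have hcmem : c ∈ Icc a b := ⟨hac, hcb⟩
  have hStle : ∀ t ∈ S, t ≤ c := fun t ht => le_csSup hSbdd ht
  -- variation sums
  have hVsum : ∀ t ∈ Icc a b, eVariationOn f (Icc a t) + eVariationOn f (Icc t b) = L := by
    intro t ht
    have h := eVariationOn.Icc_add_Icc f ht.1 ht.2 ht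
    rwa [inter_eq_self_of_subset_right (Icc_subset_Icc le_rfl ht.2),
      inter_eq_self_of_subset_right (Icc_subset_Icc ht.1 le_rfl),
      inter_self] at h
  have hVtb : ∀ t ∈ Icc a b, θ ≤ eVariationOn f (Icc a t) → eVariationOn f (Icc t b) ≤ θ := by
    intro t ht hθt
    have hsum := hVsum t ht
    have h2 : eVariationOn f (Icc t b) + θ ≤ θ + θ := by
      calc eVariationOn f (Icc t b) + θ = θ + eVariationOn f (Icc t b) := add_comm _ _
        _ ≤ eVariationOn f (Icc a t) + eVariationOn f (Icc t b) := by gcongr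
        _ = L := hsum
        _ = θ + θ := hLθθ.symm
    exact ENNReal.le_of_add_le_add_right hθtop h2
  refine ⟨c, hcmem, ?_, ?_⟩
  · -- Claim A : variation on [a,c] ≤ θ
    by_cases hcS : c ∈ S
    · exact hcS.2
    have hacne : a < c := lt_of_le_of_ne hac (fun h => hcS (h ▸ haS))
    apply iSup_le
    rintro ⟨n, u, hu, us⟩
    apply ENNReal.le_of_forall_pos_le_add
    intro ε hε _
    set ε' : ℝ := (ε : ℝ) / (4 * (n + 1)) with hε'def
    have hε'pos : 0 < ε' := by positivity
    have hcw : ContinuousWithinAt f (Icc a b) c := hcont c hcmem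
    obtain ⟨δ, hδpos, hδ⟩ := Metric.continuousWithinAt_iff.1 hcw ε' hε'pos
    set δ' := min δ (c - a) with hδ'def
    have hδ'pos : 0 < δ' := lt_min hδpos (by linarith)
    obtain ⟨t, htS, htgt⟩ := exists_lt_of_lt_csSup hSne (by linarith : c - δ' < c)
    have htc : t ≤ c := hStle t htS
    have htlt : t < c := lt_of_le_of_ne htc (fun h => hcS (h ▸ htS))
    have htmem : t ∈ Icc a b := htS.1
    set u' : ℕ → ℝ := fun i => min (u i) t with hu'def
    have hu'mono : Monotone u' := fun i j hij => min_le_min (hu hij) le_rfl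
    have hu'mem : ∀ i, u' i ∈ Icc a t := fun i => ⟨le_min (us i).1 htmem.1, min_le_right _ _⟩
    have hsum' : ∑ i ∈ Finset.range n, edist (f (u' (i + 1))) (f (u' i)) ≤ θ :=
      le_trans (eVariationOn.sum_le (f := f) (n := n) hu'mono hu'mem) htS.2
    have hpert : ∀ i, edist (f (u i)) (f (u' i)) ≤ ENNReal.ofReal (2 * ε') := by
      intro i
      rcases le_or_gt (u i) t with h | h
      · rw [hu'def]
        simp only [min_eq_left h]
        simp
      · have hu'i : u' i = t := min_eq_right h.le
        have huic : u i ≤ c := (us i).2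
        have huimem : u i ∈ Icc a b := ⟨(us i).1, huic.trans hcb⟩
        have hd1 : dist (f (u i)) (f c) < ε' := by
          apply hδ huimem
          rw [Real.dist_eq, abs_of_nonpos (by linarith)]
          have : c - δ' < u i := lt_trans htgt h
          have : δ' ≤ δ := min_le_left _ _
          linarith [lt_trans htgt h]
        have hd2 : dist (f t) (f c) < ε' := by
          apply hδ htmem
          rw [Real.dist_eq, abs_of_nonpos (by linarith)]
          have : δ' ≤ δ := min_le_left _ _
          linarith
        rw [hu'i, edist_dist]
        apply ENNReal.ofReal_le_ofReal
        calc dist (f (u i)) (f t) ≤ dist (f (u i)) (f c) + dist (f c) (f t) := dist_triangle _ _ _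
          _ ≤ ε' + ε' := by rw [dist_comm (f c)]; linarith
          _ ≤ 2 * ε' := by linarith
    calc ∑ i ∈ Finset.range n, edist (f (u (i + 1))) (f (u i))
        ≤ (∑ i ∈ Finset.range n, edist (f (u' (i + 1))) (f (u' i)))
            + n * (2 * ENNReal.ofReal (2 * ε')) :=
          sum_edist_pert (fun i => f (u i)) (fun i => f (u' i)) n _ hpert
      _ ≤ θ + ε := by
          apply add_le_add hsum'
          rw [← ENNReal.ofReal_ofNat 2, ← ENNReal.ofReal_mul (by norm_num),
            ← ENNReal.ofReal_natCast n, ← ENNReal.ofReal_mul (by positivity)]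
          rw [← ENNReal.ofReal_coe_nnreal]
          apply ENNReal.ofReal_le_ofReal
          rw [hε'def]
          have key2 : (n:ℝ) * (2 * (2 * ((ε:ℝ) / (4 * ((n:ℝ) + 1))))) = (ε:ℝ) * ((n:ℝ)/((n:ℝ)+1)) := by
            field_simp
            ring
          rw [key2]
          have key3 : (n : ℝ) / ((n:ℝ) + 1) ≤ 1 := by
            rw [div_le_one (by positivity)]; linarith
          nlinarith [ε.coe_nonneg]
  · -- Claim B : variation on [c,b] ≤ θ
    rcases eq_or_lt_of_le hcb with hceqb | hclt
    · rw [hceqb, Icc_self, eVariationOn.subsingleton f (Set.subsingleton_singleton)]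
      exact zero_le
    apply iSup_le
    rintro ⟨n, u, hu, us⟩
    apply ENNReal.le_of_forall_pos_le_add
    intro ε hε _
    set ε' : ℝ := (ε : ℝ) / (4 * (n + 1)) with hε'def
    have hε'pos : 0 < ε' := by positivity
    have hcw : ContinuousWithinAt f (Icc a b) c := hcont c hcmem
    obtain ⟨δ, hδpos, hδ⟩ := Metric.continuousWithinAt_iff.1 hcw ε' hε'pos
    set t := min (c + δ / 2) b with htdef
    have htc : c < t := lt_min (by linarith) hclt
    have htb : t ≤ b := min_le_right _ _
    have htmem : t ∈ Icc a b := ⟨hac.trans htc.le, htb⟩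
    have htnS : t ∉ S := fun h => absurd (hStle t h) (not_le.2 htc)
    have hθt : θ ≤ eVariationOn f (Icc a t) := by
      by_contra hcon
      exact htnS ⟨htmem, (not_le.1 hcon).le⟩
    have hVtbθ : eVariationOn f (Icc t b) ≤ θ := hVtb t htmem hθt
    set u' : ℕ → ℝ := fun i => max (u i) t with hu'def
    have hu'mono : Monotone u' := fun i j hij => max_le_max (hu hij) le_rfl
    have hu'mem : ∀ i, u' i ∈ Icc t b := fun i => ⟨le_max_right _ _, max_le (us i).2 htb⟩
    have hsum' : ∑ i ∈ Finset.range n, edist (f (u' (i + 1))) (f (u' i)) ≤ θ :=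
      le_trans (eVariationOn.sum_le (f := f) (n := n) hu'mono hu'mem) hVtbθ
    have hpert : ∀ i, edist (f (u i)) (f (u' i)) ≤ ENNReal.ofReal (2 * ε') := by
      intro i
      rcases le_or_gt t (u i) with h | h
      · rw [hu'def]
        simp only [max_eq_left h]
        simp
      · have hu'i : u' i = t := max_eq_right h.le
        have huic : c ≤ u i := (us i).1
        have huimem : u i ∈ Icc a b := ⟨hac.trans huic, (us i).2⟩
        have hδ2 : t - c ≤ δ / 2 := by
          have : t ≤ c + δ / 2 := min_le_left _ _
          linarith
        have hd1 : dist (f (u i)) (f c) < ε' := by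
          apply hδ huimem
          rw [Real.dist_eq, abs_of_nonneg (by linarith)]
          linarith
        have hd2 : dist (f t) (f c) < ε' := by
          apply hδ htmem
          rw [Real.dist_eq, abs_of_nonneg (by linarith)]
          linarith
        rw [hu'i, edist_dist]
        apply ENNReal.ofReal_le_ofReal
        calc dist (f (u i)) (f t) ≤ dist (f (u i)) (f c) + dist (f c) (f t) := dist_triangle _ _ _
          _ ≤ ε' + ε' := by rw [dist_comm (f c)]; linarith
          _ ≤ 2 * ε' := by linarith
    calc ∑ i ∈ Finset.range n, edist (f (u (i + 1))) (f (u i))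
        ≤ (∑ i ∈ Finset.range n, edist (f (u' (i + 1))) (f (u' i)))
            + n * (2 * ENNReal.ofReal (2 * ε')) :=
          sum_edist_pert (fun i => f (u i)) (fun i => f (u' i)) n _ hpert
      _ ≤ θ + ε := by
          apply add_le_add hsum'
          rw [← ENNReal.ofReal_ofNat 2, ← ENNReal.ofReal_mul (by norm_num),
            ← ENNReal.ofReal_natCast n, ← ENNReal.ofReal_mul (by positivity)]
          rw [← ENNReal.ofReal_coe_nnreal]
          apply ENNReal.ofReal_le_ofReal
          rw [hε'def]
          have key2 : (n:ℝ) * (2 * (2 * ((ε:ℝ) / (4 * ((n:ℝ) + 1))))) = (ε:ℝ) * ((n:ℝ)/((n:ℝ)+1)) := by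
            field_simp
            ring
          rw [key2]
          have key3 : (n : ℝ) / ((n:ℝ) + 1) ≤ 1 := by
            rw [div_le_one (by positivity)]; linarith
          nlinarith [ε.coe_nonneg]

end Auxiliary

/-- Hemisphere lemma: any closed curve on the unit sphere `S²` of length less than `2π`
lies in an open hemisphere: there is a unit vector `z` with `⟪z, γ t⟫ > 0` for all `t`. -/
theorem hemisphere_lemma
    (a b : ℝ) (hab : a ≤ b)
    (γ : ℝ → EuclideanSpace ℝ (Fin 3))
    (hcont : ContinuousOn γ (Icc a b))
    (hclosed : γ a = γ b)
    (hsphere : ∀ t ∈ Icc a b, ‖γ t‖ = 1)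
    (hlen : eVariationOn γ (Icc a b) < ENNReal.ofReal (2 * Real.pi)) :
    ∃ z : EuclideanSpace ℝ (Fin 3), ‖z‖ = 1 ∧ ∀ t ∈ Icc a b, 0 < ⟪z, γ t⟫ := by
  classical
  have haa : a ∈ Icc a b := ⟨le_rfl, hab⟩
  have hbb : b ∈ Icc a b := ⟨hab, le_rfl⟩
  set L := eVariationOn γ (Icc a b) with hLdef
  have hfin : L ≠ ⊤ := (hlen.trans ENNReal.ofReal_lt_top).ne
  obtain ⟨c, hcmem, hA, hB⟩ := exists_split γ hab hcont hfin
  have hhalf : L / 2 < ENNReal.ofReal Real.pi := by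
    apply ENNReal.div_lt_of_lt_mul
    rw [← ENNReal.ofReal_ofNat 2, ← ENNReal.ofReal_mul (by positivity)]
    rw [mul_comm]
    exact hlen
  -- subinterval variation sums
  have hVsum : ∀ s t u : ℝ, a ≤ s → s ≤ t → t ≤ u → u ≤ b →
      eVariationOn γ (Icc s t) + eVariationOn γ (Icc t u) = eVariationOn γ (Icc s u) := by
    intro s t u hs hst htu hu
    have h := eVariationOn.Icc_add_Icc γ (s := Icc s u) hst htu ⟨hst, htu⟩
    rwa [inter_eq_self_of_subset_right (Icc_subset_Icc le_rfl htu),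
      inter_eq_self_of_subset_right (Icc_subset_Icc hst le_rfl),
      inter_self] at h
  -- specialize the geodesic lemma
  have harc : ∀ s t : ℝ, a ≤ s → s ≤ t → t ≤ b →
      ENNReal.ofReal (Real.arccos ⟪γ s, γ t⟫) ≤ eVariationOn γ (Icc s t) := by
    intro s t hs hst ht
    exact arccos_le_eVariationOn γ hst (hcont.mono (Icc_subset_Icc hs ht))
      (fun r hr => hsphere r ⟨hs.trans hr.1, hr.2.trans ht⟩)
  set p := γ a with hpdef
  set q := γ c with hqdef
  have hp1 : ‖p‖ = 1 := hsphere a haa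
  have hq1 : ‖q‖ = 1 := hsphere c hcmem
  have hpq_arc : Real.arccos ⟪p, q⟫ < Real.pi := by
    have h1 : ENNReal.ofReal (Real.arccos ⟪p, q⟫) < ENNReal.ofReal Real.pi :=
      lt_of_le_of_lt (le_trans (harc a c le_rfl hcmem.1 hcmem.2) hA) hhalf
    exact (ENNReal.ofReal_lt_ofReal_iff Real.pi_pos).1 h1
  have hpq_gt : (-1 : ℝ) < ⟪p, q⟫ := by
    by_contra hcon
    push_neg at hcon
    rw [Real.arccos_of_le_neg_one hcon] at hpq_arc
    exact lt_irrefl _ hpq_arc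
  have hnormsq : ‖p + q‖ ^ 2 = 2 + 2 * ⟪p, q⟫ := by
    rw [norm_add_sq_real, hp1, hq1]; ring
  have hnormpos : 0 < ‖p + q‖ := by
    nlinarith [norm_nonneg (p + q)]
  have hpqne : p + q ≠ 0 := by
    intro h
    rw [h, norm_zero] at hnormpos
    exact lt_irrefl _ hnormpos
  set z := ‖p + q‖⁻¹ • (p + q) with hzdef
  have hz1 : ‖z‖ = 1 := norm_smul_inv_norm hpqne
  have hinnerz : ∀ w : EuclideanSpace ℝ (Fin 3), ⟪z, w⟫ = ‖p + q‖⁻¹ * (⟪p, w⟫ + ⟪q, w⟫) := by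
    intro w
    rw [hzdef, real_inner_smul_left, inner_add_left]
  have hzp : 0 < ⟪z, p⟫ := by
    rw [hinnerz p]
    have h1 : ⟪p, p⟫ = (1 : ℝ) := by rw [real_inner_self_eq_norm_sq, hp1]; norm_num
    have h2 : ⟪q, p⟫ = ⟪p, q⟫ := real_inner_comm _ _
    rw [h1, h2]
    have : 0 < 1 + ⟪p, q⟫ := by linarith
    positivity
  have hzq : 0 < ⟪z, q⟫ := by
    rw [hinnerz q]
    have h1 : ⟪q, q⟫ = (1 : ℝ) := by rw [real_inner_self_eq_norm_sq, hq1]; norm_num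
    rw [h1]
    have : 0 < ⟪p, q⟫ + 1 := by linarith
    positivity
  refine ⟨z, hz1, ?_⟩
  by_contra hcon
  push_neg at hcon
  obtain ⟨t0, ht0mem, ht0⟩ := hcon
  have hzcont : ∀ s t : ℝ, a ≤ s → t ≤ b → ContinuousOn (fun r => ⟪z, γ r⟫) (Icc s t) :=
    fun s t hs ht => continuousOn_const.inner (hcont.mono (Icc_subset_Icc hs ht))
  -- case split on which half t0 lies in
  rcases le_total t0 c with htc | htc
  · -- t0 ∈ [a, c] : find zero of inner on [a, t0]
    have hzc : ContinuousOn (fun r => ⟪z, γ r⟫) (Icc a t0) := hzcont a t0 le_rfl ht0mem.2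
    have hiv := intermediate_value_Icc' (α := ℝ) ht0mem.1 hzc
    have h0mem : (0 : ℝ) ∈ Icc ⟪z, γ t0⟫ ⟪z, γ a⟫ := ⟨ht0, hzp.le⟩
    obtain ⟨t1, ht1mem, ht1⟩ := hiv h0mem
    -- t1 ∈ [a, t0] ⊆ [a, c]
    have ht1c : t1 ≤ c := ht1mem.2.trans htc
    have harc1 := harc a t1 le_rfl ht1mem.1 (ht1c.trans hcmem.2)
    have harc2 := harc t1 c ht1mem.1 ht1c hcmem.2
    have hkey : ⟪γ t1, q⟫ = -⟪γ t1, p⟫ := by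
      have ht1' : ⟪z, γ t1⟫ = 0 := ht1
      have h2 := hinnerz (γ t1)
      rw [ht1'] at h2
      have h3 : ⟪p, γ t1⟫ + ⟪q, γ t1⟫ = 0 := by
        have h4 : ‖p + q‖⁻¹ ≠ 0 := inv_ne_zero hnormpos.ne'
        rcases mul_eq_zero.1 h2.symm with h | h
        · exact absurd h h4
        · exact h
      have c1 : ⟪γ t1, q⟫ = ⟪q, γ t1⟫ := real_inner_comm _ _
      have c2 : ⟪γ t1, p⟫ = ⟪p, γ t1⟫ := real_inner_comm _ _
      linarith
    have hsumarc : Real.arccos ⟪p, γ t1⟫ + Real.arccos ⟪γ t1, q⟫ = Real.pi := by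
      rw [hkey, Real.arccos_neg, real_inner_comm p (γ t1)]
      ring
    have hπle : ENNReal.ofReal Real.pi ≤ eVariationOn γ (Icc a c) := by
      rw [← hsumarc, ENNReal.ofReal_add (Real.arccos_nonneg _) (Real.arccos_nonneg _)]
      rw [← hVsum a t1 c le_rfl ht1mem.1 ht1c (hcmem.2)]
      exact add_le_add harc1 harc2
    exact absurd hhalf (not_lt.2 (hπle.trans hA))
  · -- t0 ∈ [c, b]
    have hzc : ContinuousOn (fun r => ⟪z, γ r⟫) (Icc c t0) := hzcont c t0 hcmem.1 ht0mem.2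
    have hiv := intermediate_value_Icc' (α := ℝ) htc hzc
    have h0mem : (0 : ℝ) ∈ Icc ⟪z, γ t0⟫ ⟪z, γ c⟫ := ⟨ht0, hzq.le⟩
    obtain ⟨t1, ht1mem, ht1⟩ := hiv h0mem
    have ht1c : c ≤ t1 := ht1mem.1
    have ht1b : t1 ≤ b := ht1mem.2.trans ht0mem.2
    have harc1 := harc c t1 hcmem.1 ht1c ht1b
    have harc2 := harc t1 b (hcmem.1.trans ht1c) ht1b le_rfl
    have hkey : ⟪γ t1, p⟫ = -⟪γ t1, q⟫ := by
      have ht1' : ⟪z, γ t1⟫ = 0 := ht1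
      have h2 := hinnerz (γ t1)
      rw [ht1'] at h2
      have h3 : ⟪p, γ t1⟫ + ⟪q, γ t1⟫ = 0 := by
        have h4 : ‖p + q‖⁻¹ ≠ 0 := inv_ne_zero hnormpos.ne'
        rcases mul_eq_zero.1 h2.symm with h | h
        · exact absurd h h4
        · exact h
      have c1 : ⟪γ t1, q⟫ = ⟪q, γ t1⟫ := real_inner_comm _ _
      have c2 : ⟪γ t1, p⟫ = ⟪p, γ t1⟫ := real_inner_comm _ _
      linarith
    have hsumarc : Real.arccos ⟪q, γ t1⟫ + Real.arccos ⟪γ t1, γ b⟫ = Real.pi := by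
      rw [← hclosed, hkey, Real.arccos_neg, real_inner_comm q (γ t1)]
      ring
    have hπle : ENNReal.ofReal Real.pi ≤ eVariationOn γ (Icc c b) := by
      rw [← hsumarc, ENNReal.ofReal_add (Real.arccos_nonneg _) (Real.arccos_nonneg _)]
      rw [← hVsum c t1 b hcmem.1 ht1c ht1b le_rfl]
      exact add_le_add harc1 harc2
    exact absurd hhalf (not_lt.2 (hπle.trans hB))
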